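/- In the situation of the coordinate change u = z − q with q ∈ 𝕂[x₁,…,xₙ] a nonzero homogeneous polynomial of positive degree: suppose there exists f ∈ J that is z-regular of order c, with expansion f = Σ_{i≥0} f_i z^i, and suppose o₁ > o. Then c!·deg q = o and q^{p^e} = λ·in(f_{c−p^e}) for some nonzero constant λ ∈ 𝕂^*, where p^e is the largest power of p dividing c and in(g) denotes the initial form (lowest-degree homogeneous part) of g. Here J ⊆ R = 𝕂[[z,x₁,…,xₙ]] is an ideal of order c with 1 ≤ c < ∞, o = ord coeff_{V(z)}(J) and o₁ = ord coeff_{V(u)}(J). -/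

import Mathlib

set_option synthInstance.maxHeartbeats 400000
set_option maxHeartbeats 1000000

noncomputable section

/-- The order of an element `g` with respect to an ideal `I`:  `sup {k : ℕ | g ∈ I ^ k}`,
with value in `ℕ∞` (so that the order of `0` is `⊤`). -/
def elemOrd {A : Type*} [CommRing A] (I : Ideal A) (g : A) : ℕ∞ :=
  sSup ((fun k : ℕ => (k : ℕ∞)) '' {k : ℕ | g ∈ I ^ k})

/-- The order of an ideal `J` with respect to an ideal `I`: `sup {k : ℕ | J ⊆ I ^ k}`. -/
def idealOrd {A : Type*} [CommRing A] (I J : Ideal A) : ℕ∞ :=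
  sSup ((fun k : ℕ => (k : ℕ∞)) '' {k : ℕ | J ≤ I ^ k})

/-- The coefficient ideal `K = coeff_{V(z)}(J) = Σ_{i<c} (f_i : f ∈ J)^{c!/(c−i)}` of an ideal
`J ⊆ R = 𝕂[[z,x₁,…,xₙ]] = Q[[z]]` with respect to the hypersurface `V(z)`, an ideal of
`Q = 𝕂[[x₁,…,xₙ]]`. -/
def coeffIdeal {𝕂 : Type*} [Field 𝕂] {n : ℕ}
    (J : Ideal (PowerSeries (MvPowerSeries (Fin n) 𝕂))) (c : ℕ) :
    Ideal (MvPowerSeries (Fin n) 𝕂) :=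
  ∑ i ∈ Finset.range c,
    (Ideal.span ((PowerSeries.coeff i) '' J)) ^ (c.factorial / (c - i))

/-- The coefficient ideal `K₁ = coeff_{V(u)}(J) = Σ_{i<c} (f̃_i : f ∈ J)^{c!/(c−i)}` of `J`
with respect to `V(u)`, computed from a function `E` assigning to each `f ∈ R` the family of
coefficients of its `u`-expansion. -/
def coeffIdealE {𝕂 : Type*} [Field 𝕂] {n : ℕ}
    (E : PowerSeries (MvPowerSeries (Fin n) 𝕂) → ℕ → MvPowerSeries (Fin n) 𝕂)
    (J : Ideal (PowerSeries (MvPowerSeries (Fin n) 𝕂))) (c : ℕ) :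
    Ideal (MvPowerSeries (Fin n) 𝕂) :=
  ∑ i ∈ Finset.range c, (Ideal.span ((fun f => E f i) '' J)) ^ (c.factorial / (c - i))

/-- An element `f = Σ_{i≥0} f_i z^i` of `R = Q[[z]]` is `z`-regular of order `c` if
`f_i(0) = 0` for all `i < c` and `f_c(0) ≠ 0`. -/
def zRegular {𝕂 : Type*} [Field 𝕂] {n : ℕ}
    (f : PowerSeries (MvPowerSeries (Fin n) 𝕂)) (c : ℕ) : Prop :=
  (∀ i < c, MvPowerSeries.constantCoeff
      (PowerSeries.coeff i f) = 0) ∧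
    MvPowerSeries.constantCoeff
      (PowerSeries.coeff c f) ≠ 0

/-- The homogeneous component of degree `d` of a multivariate power series. -/
def homogComp {𝕂 : Type*} [Field 𝕂] {n : ℕ} (d : ℕ) (g : MvPowerSeries (Fin n) 𝕂) :
    MvPowerSeries (Fin n) 𝕂 :=
  fun m => if m.degree = d then MvPowerSeries.coeff m g else 0

/-- The initial form of a power series: its nonzero homogeneous component of lowest degree. -/
def initialForm {𝕂 : Type*} [Field 𝕂] {n : ℕ} (g : MvPowerSeries (Fin n) 𝕂) :
    MvPowerSeries (Fin n) 𝕂 :=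
  homogComp (sInf {d : ℕ | homogComp d g ≠ 0}) g

namespace KGaux

open MvPowerSeries

variable {𝕂 : Type*} [Field 𝕂] {n : ℕ}

lemma fdeg_add (m₁ m₂ : Fin n →₀ ℕ) : (m₁ + m₂).degree = m₁.degree + m₂.degree := by
  simp [Finsupp.degree_eq_weight_one, map_add]

lemma fdeg_single (i : Fin n) (k : ℕ) : (Finsupp.single i k).degree = k := by
  by_cases hk : k = 0
  · subst hk; simp [map_zero]
  · exact Finsupp.degree_single i k

/-- order ≥ a -/
def OrdGe (a : ℕ) (x : MvPowerSeries (Fin n) 𝕂) : Prop :=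
  ∀ m : Fin n →₀ ℕ, m.degree < a → MvPowerSeries.coeff m x = 0

lemma ordGe_zero (x : MvPowerSeries (Fin n) 𝕂) : OrdGe 0 x :=
  fun _ hm => absurd hm (Nat.not_lt_zero _)

lemma OrdGe.mono {a b : ℕ} (h : b ≤ a) {x : MvPowerSeries (Fin n) 𝕂} (hx : OrdGe a x) :
    OrdGe b x := fun m hm => hx m (lt_of_lt_of_le hm h)

lemma OrdGe.add {a : ℕ} {x y : MvPowerSeries (Fin n) 𝕂} (hx : OrdGe a x) (hy : OrdGe a y) :
    OrdGe a (x + y) := fun m hm => by rw [map_add, hx m hm, hy m hm, add_zero]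

lemma OrdGe.neg {a : ℕ} {x : MvPowerSeries (Fin n) 𝕂} (hx : OrdGe a x) : OrdGe a (-x) :=
  fun m hm => by rw [map_neg, hx m hm, neg_zero]

lemma OrdGe.sub {a : ℕ} {x y : MvPowerSeries (Fin n) 𝕂} (hx : OrdGe a x) (hy : OrdGe a y) :
    OrdGe a (x - y) := by rw [sub_eq_add_neg]; exact hx.add hy.neg

lemma OrdGe.finsetSum {a : ℕ} {ι : Type*} {s : Finset ι} {F : ι → MvPowerSeries (Fin n) 𝕂}
    (h : ∀ i ∈ s, OrdGe a (F i)) : OrdGe a (∑ i ∈ s, F i) := fun m hm => by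
  rw [map_sum]; exact Finset.sum_eq_zero fun i hi => h i hi m hm

lemma OrdGe.mul {a b : ℕ} {x y : MvPowerSeries (Fin n) 𝕂} (hx : OrdGe a x) (hy : OrdGe b y) :
    OrdGe (a + b) (x * y) := by
  intro m hm
  rw [MvPowerSeries.coeff_mul]
  apply Finset.sum_eq_zero
  intro p hp
  rw [Finset.HasAntidiagonal.mem_antidiagonal] at hp
  by_cases h1 : p.1.degree < a
  · rw [hx _ h1, zero_mul]
  · have hdeg : p.1.degree + p.2.degree = m.degree := by rw [← fdeg_add, hp]
    have h2 : p.2.degree < b := by omega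
    rw [hy _ h2, mul_zero]

lemma OrdGe.mul_right {a : ℕ} {x : MvPowerSeries (Fin n) 𝕂} (hx : OrdGe a x)
    (y : MvPowerSeries (Fin n) 𝕂) : OrdGe a (x * y) := by
  simpa using hx.mul (ordGe_zero y)

lemma OrdGe.mul_left {a : ℕ} {x : MvPowerSeries (Fin n) 𝕂} (hx : OrdGe a x)
    (y : MvPowerSeries (Fin n) 𝕂) : OrdGe a (y * x) := by
  simpa using (ordGe_zero y).mul hx

lemma OrdGe.pow {a : ℕ} {x : MvPowerSeries (Fin n) 𝕂} (hx : OrdGe a x) (k : ℕ) :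
    OrdGe (k * a) (x ^ k) := by
  induction k with
  | zero => simpa using ordGe_zero (1 : MvPowerSeries (Fin n) 𝕂)
  | succ k ih => rw [pow_succ, Nat.succ_mul]; exact ih.mul hx

/-- the ideal of series of order at least `a` -/
def ordIdeal (𝕂 : Type*) [Field 𝕂] (n a : ℕ) : Ideal (MvPowerSeries (Fin n) 𝕂) where
  carrier := {x | OrdGe a x}
  add_mem' hx hy := hx.add hy
  zero_mem' := fun m _ => map_zero _
  smul_mem' r x hx := by simpa [smul_eq_mul] using hx.mul_left r

lemma mem_ordIdeal {a : ℕ} {x : MvPowerSeries (Fin n) 𝕂} :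
    x ∈ ordIdeal 𝕂 n a ↔ OrdGe a x := Iff.rfl

lemma ordIdeal_anti {a b : ℕ} (h : a ≤ b) : ordIdeal 𝕂 n b ≤ ordIdeal 𝕂 n a :=
  fun _ hx => OrdGe.mono h hx

lemma ordIdeal_mul_le (a b : ℕ) :
    ordIdeal 𝕂 n a * ordIdeal 𝕂 n b ≤ ordIdeal 𝕂 n (a + b) :=
  Ideal.mul_le.mpr fun _ hx _ hy => hx.mul hy

lemma ordIdeal_pow_le (a k : ℕ) : (ordIdeal 𝕂 n a) ^ k ≤ ordIdeal 𝕂 n (k * a) := by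
  induction k with
  | zero => exact fun x _ => by simpa [mem_ordIdeal] using ordGe_zero x
  | succ k ih =>
    rw [pow_succ, Nat.succ_mul]
    exact le_trans (mul_le_mul' ih (le_refl _)) (ordIdeal_mul_le _ _)

lemma pow_le_pow_of_le {A : Type*} [CommRing A] {I J : Ideal A} (h : I ≤ J) (k : ℕ) :
    I ^ k ≤ J ^ k := by
  induction k with
  | zero => simp
  | succ k ih => rw [pow_succ, pow_succ]; exact mul_le_mul' ih h

lemma mem_maximalIdeal_iff (x : MvPowerSeries (Fin n) 𝕂) :
    x ∈ IsLocalRing.maximalIdeal (MvPowerSeries (Fin n) 𝕂) ↔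
      constantCoeff x = 0 := by
  rw [IsLocalRing.mem_maximalIdeal, mem_nonunits_iff]
  constructor
  · intro h
    by_contra h0
    exact h (IsUnit.of_mul_eq_one _ (MvPowerSeries.mul_invOfUnit x (Units.mk0 _ h0) rfl))
  · intro h hu
    have := hu.map (constantCoeff)
    rw [h] at this
    exact this.ne_zero rfl

lemma maximalIdeal_le_ordIdeal :
    IsLocalRing.maximalIdeal (MvPowerSeries (Fin n) 𝕂) ≤ ordIdeal 𝕂 n 1 := by
  intro x hx m hm
  have h0 : m = 0 := (Finsupp.degree_eq_zero_iff m).mp (Nat.lt_one_iff.mp hm)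
  subst h0
  rw [MvPowerSeries.coeff_zero_eq_constantCoeff_apply]
  exact (mem_maximalIdeal_iff x).mp hx

lemma maxpow_le_ordIdeal (k : ℕ) :
    (IsLocalRing.maximalIdeal (MvPowerSeries (Fin n) 𝕂)) ^ k ≤ ordIdeal 𝕂 n k := by
  refine le_trans (pow_le_pow_of_le maximalIdeal_le_ordIdeal k) ?_
  have := ordIdeal_pow_le (𝕂 := 𝕂) (n := n) 1 k
  rwa [mul_one] at this


def HasOrd (s : ℕ) (x : MvPowerSeries (Fin n) 𝕂) : Prop :=
  OrdGe s x ∧ ∃ m : Fin n →₀ ℕ, m.degree = s ∧ MvPowerSeries.coeff m x ≠ 0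

lemma finite_deg_eq (s : ℕ) : {m : Fin n →₀ ℕ | m.degree = s}.Finite := by
  have hsub : {m : Fin n →₀ ℕ | m.degree = s} ⊆
      Set.Iic (Finsupp.equivFunOnFinite.symm (fun _ => s)) := by
    intro m hm i
    simp only [Finsupp.equivFunOnFinite_symm_apply_apply]
    exact hm ▸ Finsupp.le_degree i m
  exact (Set.finite_Iic _).subset hsub

lemma HasOrd.mul {s t : ℕ} {x y : MvPowerSeries (Fin n) 𝕂}
    (hx : HasOrd s x) (hy : HasOrd t y) : HasOrd (s + t) (x * y) := by
  obtain ⟨hxo, hxw⟩ := hx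
  obtain ⟨hyo, hyw⟩ := hy
  refine ⟨hxo.mul hyo, ?_⟩
  -- maximal witnesses in Lex order
  have hTx : {m : Fin n →₀ ℕ | m.degree = s ∧ MvPowerSeries.coeff m x ≠ 0}.Finite :=
    (finite_deg_eq s).subset (fun m hm => hm.1)
  have hTy : {m : Fin n →₀ ℕ | m.degree = t ∧ MvPowerSeries.coeff m y ≠ 0}.Finite :=
    (finite_deg_eq t).subset (fun m hm => hm.1)
  obtain ⟨m₀, hm₀, hm₀max⟩ := Set.Finite.exists_maximalFor toLex _ hTx
    (by obtain ⟨m, h1, h2⟩ := hxw; exact ⟨m, h1, h2⟩)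
  obtain ⟨m₁, hm₁, hm₁max⟩ := Set.Finite.exists_maximalFor toLex _ hTy
    (by obtain ⟨m, h1, h2⟩ := hyw; exact ⟨m, h1, h2⟩)
  refine ⟨m₀ + m₁, by rw [fdeg_add, hm₀.1, hm₁.1], ?_⟩
  rw [MvPowerSeries.coeff_mul]
  rw [Finset.sum_eq_single (m₀, m₁)]
  · exact mul_ne_zero hm₀.2 hm₁.2
  · intro p hp hpne
    rw [Finset.HasAntidiagonal.mem_antidiagonal] at hp
    by_cases h1 : MvPowerSeries.coeff p.1 x = 0
    · rw [h1, zero_mul]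
    by_cases h2 : MvPowerSeries.coeff p.2 y = 0
    · rw [h2, mul_zero]
    exfalso
    have hdeg : p.1.degree + p.2.degree = s + t := by
      rw [← fdeg_add, hp, fdeg_add, hm₀.1, hm₁.1]
    have hd1 : s ≤ p.1.degree := by
      by_contra hlt; exact h1 (hxo p.1 (by omega))
    have hd2 : t ≤ p.2.degree := by
      by_contra hlt; exact h2 (hyo p.2 (by omega))
    have hd1' : p.1.degree = s := by omega
    have hd2' : p.2.degree = t := by omega
    have hp1 : p.1 ∈ {m : Fin n →₀ ℕ | m.degree = s ∧ MvPowerSeries.coeff m x ≠ 0} :=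
      ⟨hd1', h1⟩
    have hp2 : p.2 ∈ {m : Fin n →₀ ℕ | m.degree = t ∧ MvPowerSeries.coeff m y ≠ 0} :=
      ⟨hd2', h2⟩
    -- lex maximality forces p = (m₀, m₁)
    have hle1 : toLex p.1 ≤ toLex m₀ := by
      rcases le_or_gt (toLex p.1) (toLex m₀) with h | h
      · exact h
      · exact hm₀max hp1 h.le
    have hle2 : toLex p.2 ≤ toLex m₁ := by
      rcases le_or_gt (toLex p.2) (toLex m₁) with h | h
      · exact h
      · exact hm₁max hp2 h.le
    have he : toLex p.1 + toLex p.2 = toLex m₀ + toLex m₁ := by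
      have : toLex (p.1 + p.2) = toLex (m₀ + m₁) := by rw [hp]
      exact this
    have h1e : toLex p.1 = toLex m₀ := by
      rcases lt_or_eq_of_le hle1 with h | h
      · exfalso
        have := add_lt_add_of_lt_of_le h hle2
        rw [he] at this
        exact lt_irrefl _ this
      · exact h
    have h2e : toLex p.2 = toLex m₁ := by
      have := he
      rw [h1e] at this
      exact add_left_cancel this
    exact hpne (Prod.ext (toLex.injective h1e) (toLex.injective h2e))
  · intro h
    exfalso
    exact h (Finset.HasAntidiagonal.mem_antidiagonal.mpr rfl)

lemma HasOrd.pow {s : ℕ} {x : MvPowerSeries (Fin n) 𝕂} (hx : HasOrd s x) (k : ℕ)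
    (hk : 0 < k) : HasOrd (k * s) (x ^ k) := by
  induction k with
  | zero => omega
  | succ k ih =>
    rcases Nat.eq_zero_or_pos k with hk0 | hk0
    · subst hk0; simpa using hx
    · rw [pow_succ, Nat.succ_mul]; exact (ih hk0).mul hx
lemma HasOrd.add_OrdGe {s : ℕ} {x y : MvPowerSeries (Fin n) 𝕂}
    (hx : HasOrd s x) (hy : OrdGe (s + 1) y) : HasOrd s (x + y) := by
  obtain ⟨hxo, m, hm, hmne⟩ := hx
  refine ⟨hxo.add (hy.mono (by omega)), m, hm, ?_⟩
  rw [map_add, hy m (by omega), add_zero]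
  exact hmne

lemma hasOrd_C {a : 𝕂} (ha : a ≠ 0) : HasOrd 0 (MvPowerSeries.C a : MvPowerSeries (Fin n) 𝕂) := by
  refine ⟨fun m hm => absurd hm (Nat.not_lt_zero _), 0, map_zero _, ?_⟩
  rw [MvPowerSeries.coeff_zero_eq_constantCoeff_apply, MvPowerSeries.constantCoeff_C]
  exact ha

lemma hasOrd_of_constantCoeff {x : MvPowerSeries (Fin n) 𝕂}
    (hx : constantCoeff x ≠ 0) : HasOrd 0 x :=
  ⟨fun m hm => absurd hm (Nat.not_lt_zero _), 0, map_zero _, by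
    rw [MvPowerSeries.coeff_zero_eq_constantCoeff_apply]; exact hx⟩

/-- every nonzero-coefficient series has an exact order -/
lemma exists_hasOrd {x : MvPowerSeries (Fin n) 𝕂} {m : Fin n →₀ ℕ}
    (hm : MvPowerSeries.coeff m x ≠ 0) :
    ∃ s : ℕ, s ≤ m.degree ∧ HasOrd s x := by
  set S := {s : ℕ | ∃ m' : Fin n →₀ ℕ, m'.degree = s ∧ MvPowerSeries.coeff m' x ≠ 0} with hS
  have hne : S.Nonempty := ⟨m.degree, m, rfl, hm⟩
  refine ⟨sInf S, Nat.sInf_le ⟨m, rfl, hm⟩, ?_, Nat.sInf_mem hne⟩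
  intro m' hm'
  by_contra h0
  have : m'.degree ∈ S := ⟨m', rfl, h0⟩
  exact absurd (Nat.sInf_le this) (by omega)

/-- root extraction for OrdGe -/
lemma ordGe_root {x : MvPowerSeries (Fin n) 𝕂} {M T t : ℕ} (hM : 0 < M)
    (hpow : OrdGe T (x ^ M)) (ht : M * (t - 1) < T) : OrdGe t x := by
  intro m hm
  by_contra h0
  obtain ⟨s, hsle, hs⟩ := exists_hasOrd h0
  have hp := hs.pow M hM
  obtain ⟨-, m', hm', hm'ne⟩ := hp
  have : T ≤ m'.degree := by
    by_contra hlt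
    exact hm'ne (hpow m' (by omega))
  rw [hm'] at this
  have : M * s ≤ M * (t - 1) := Nat.mul_le_mul_left M (by omega)
  omega
def splitVar (i : Fin n) (g : MvPowerSeries (Fin n) 𝕂) : MvPowerSeries (Fin n) 𝕂 :=
  fun m => if (m + Finsupp.single i 1).support.min = (i : WithTop (Fin n))
    then MvPowerSeries.coeff (m + Finsupp.single i 1) g else 0

lemma coeff_splitVar (i : Fin n) (g : MvPowerSeries (Fin n) 𝕂) (m : Fin n →₀ ℕ) :
    MvPowerSeries.coeff m (splitVar i g) =
      if (m + Finsupp.single i 1).support.min = (i : WithTop (Fin n))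
        then MvPowerSeries.coeff (m + Finsupp.single i 1) g else 0 := rfl

lemma coeff_X_mul_splitVar (i : Fin n) (g : MvPowerSeries (Fin n) 𝕂) (m : Fin n →₀ ℕ) :
    MvPowerSeries.coeff m (X i * splitVar i g) =
      if Finsupp.single i 1 ≤ m ∧ m.support.min = (i : WithTop (Fin n))
        then MvPowerSeries.coeff m g else 0 := by
  rw [show (X i : MvPowerSeries (Fin n) 𝕂) = monomial (Finsupp.single i 1) 1 from rfl,
    MvPowerSeries.coeff_monomial_mul, coeff_splitVar]
  by_cases h1 : Finsupp.single i 1 ≤ m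
  · rw [if_pos h1]
    have hmm : m - Finsupp.single i 1 + Finsupp.single i 1 = m := tsub_add_cancel_of_le h1
    rw [hmm]
    by_cases h2 : m.support.min = (i : WithTop (Fin n))
    · rw [if_pos h2, if_pos ⟨h1, h2⟩, one_mul]
    · rw [if_neg h2, if_neg (by tauto), mul_zero]
  · rw [if_neg h1, if_neg (by tauto)]

lemma eq_sum_X_mul_splitVar (g : MvPowerSeries (Fin n) 𝕂)
    (hg : constantCoeff g = 0) :
    g = ∑ i : Fin n, X i * splitVar i g := by
  ext m
  rw [map_sum]
  by_cases hm : m = 0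
  · subst hm
    rw [MvPowerSeries.coeff_zero_eq_constantCoeff_apply, hg]
    symm
    apply Finset.sum_eq_zero
    intro i _
    rw [coeff_X_mul_splitVar]
    rw [if_neg]
    rintro ⟨h1, -⟩
    have := Finsupp.single_le_iff.mp h1
    simp at this
  · have hne : m.support.Nonempty := Finsupp.support_nonempty_iff.mpr hm
    set i₀ := m.support.min' hne with hi₀
    have hmin : m.support.min = (i₀ : WithTop (Fin n)) := (Finset.coe_min' hne).symm
    rw [Finset.sum_eq_single i₀]
    · rw [coeff_X_mul_splitVar, if_pos]
      constructor
      · rw [Finsupp.single_le_iff]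
        have : i₀ ∈ m.support := Finset.min'_mem _ _
        rw [Finsupp.mem_support_iff] at this
        omega
      · exact hmin
    · intro i _ hii
      rw [coeff_X_mul_splitVar, if_neg]
      rintro ⟨-, h2⟩
      rw [hmin] at h2
      exact hii (WithTop.coe_injective h2.symm)
    · intro h; exact absurd (Finset.mem_univ i₀) h

lemma OrdGe.splitVar_ord {k : ℕ} {g : MvPowerSeries (Fin n) 𝕂} (hg : OrdGe (k + 1) g)
    (i : Fin n) : OrdGe k (splitVar i g) := by
  intro m hm
  rw [coeff_splitVar]
  split_ifs with h
  · apply hg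
    rw [fdeg_add, fdeg_single]
    omega
  · rfl

lemma ordIdeal_le_maxpow (k : ℕ) :
    ordIdeal 𝕂 n k ≤ (IsLocalRing.maximalIdeal (MvPowerSeries (Fin n) 𝕂)) ^ k := by
  induction k with
  | zero => simp
  | succ k ih =>
    intro g hg
    have hg0 : constantCoeff g = 0 := by
      rw [← MvPowerSeries.coeff_zero_eq_constantCoeff_apply]
      exact hg 0 (by rw [map_zero]; omega)
    rw [eq_sum_X_mul_splitVar g hg0]
    apply Ideal.sum_mem
    intro i _
    rw [pow_succ, mul_comm (X i)]
    exact Ideal.mul_mem_mul (ih (OrdGe.splitVar_ord hg i))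
      ((mem_maximalIdeal_iff _).mpr (constantCoeff_X i))
section IdealOrd
variable {A : Type*} [CommRing A] {I J : Ideal A}

lemma le_pow_of_lt_idealOrd {k : ℕ} (h : (k : ℕ∞) < idealOrd I J) : J ≤ I ^ (k + 1) := by
  by_contra hnot
  have hb : ∀ a ∈ (fun k : ℕ => (k : ℕ∞)) '' {k : ℕ | J ≤ I ^ k}, a ≤ (k : ℕ∞) := by
    rintro a ⟨j, hj, rfl⟩
    by_contra hja
    push_neg at hja
    rw [Nat.cast_lt] at hja
    exact hnot (le_trans hj (Ideal.pow_le_pow_right (by omega)))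
  exact absurd (sSup_le hb) (not_le.mpr h)

lemma idealOrd_le_pow {k : ℕ} (h : idealOrd I J = (k : ℕ∞)) : J ≤ I ^ k := by
  rcases Nat.eq_zero_or_pos k with hk | hk
  · subst hk; simpa using le_top
  by_contra hnot
  have hb : ∀ a ∈ (fun k : ℕ => (k : ℕ∞)) '' {k : ℕ | J ≤ I ^ k}, a ≤ ((k - 1 : ℕ) : ℕ∞) := by
    rintro a ⟨j, hj, rfl⟩
    rw [Nat.cast_le]
    by_contra hja
    push_neg at hja
    exact hnot (le_trans hj (Ideal.pow_le_pow_right (by omega)))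
  have hs := sSup_le hb
  rw [idealOrd] at h
  rw [h, Nat.cast_le] at hs
  omega

lemma idealOrd_not_le_pow {k : ℕ} (h : idealOrd I J = (k : ℕ∞)) : ¬ J ≤ I ^ (k + 1) := by
  intro hle
  have hs : ((k + 1 : ℕ) : ℕ∞) ≤ idealOrd I J := le_sSup ⟨k + 1, hle, rfl⟩
  rw [h, Nat.cast_le] at hs
  omega

end IdealOrd

section IdealSum
variable {A : Type*} [CommRing A] {ι : Type*}

lemma ideal_sum_le {s : Finset ι} {f : ι → Ideal A} {P : Ideal A}
    (h : ∀ i ∈ s, f i ≤ P) : (∑ i ∈ s, f i) ≤ P := by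
  classical
  induction s using Finset.induction_on with
  | empty => simpa using bot_le
  | @insert a s ha ih =>
    rw [Finset.sum_insert ha, Submodule.add_eq_sup]
    exact sup_le (h _ (Finset.mem_insert_self _ _))
      (ih fun i hi => h i (Finset.mem_insert_of_mem hi))

lemma ideal_le_sum {s : Finset ι} {f : ι → Ideal A} {i : ι} (hi : i ∈ s) :
    f i ≤ ∑ j ∈ s, f j := by
  classical
  induction s using Finset.induction_on with
  | empty => exact absurd hi (Finset.notMem_empty i)
  | @insert a s ha ih =>
    rw [Finset.sum_insert ha, Submodule.add_eq_sup]
    rcases Finset.mem_insert.mp hi with h | h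
    · subst h; exact le_sup_left
    · exact le_trans (ih h) le_sup_right

end IdealSum

lemma not_dvd_choose_pow {p : ℕ} (hp : p.Prime) :
    ∀ e c : ℕ, p ^ e ∣ c → ¬ p ^ (e + 1) ∣ c → ¬ p ∣ c.choose (p ^ e) := by
  intro e
  induction e with
  | zero =>
    intro c _ h2
    simpa [Nat.choose_one_right] using (by simpa using h2 : ¬ p ∣ c)
  | succ e ih =>
    intro c h1 h2
    have hfact : Fact p.Prime := ⟨hp⟩
    have hp0 : 0 < p := hp.pos
    have hpc : p ∣ c := dvd_trans (dvd_pow_self p (Nat.succ_ne_zero e)) h1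
    have hmod : c.choose (p ^ (e + 1)) ≡
        (c % p).choose ((p ^ (e + 1)) % p) * (c / p).choose ((p ^ (e + 1)) / p) [MOD p] :=
      Choose.choose_modEq_choose_mod_mul_choose_div_nat
    have hpe1 : (p ^ (e + 1)) % p = 0 :=
      (Nat.mod_eq_zero_of_dvd (dvd_pow_self p (Nat.succ_ne_zero e)))
    have hpe2 : (p ^ (e + 1)) / p = p ^ e := by
      rw [pow_succ]; exact Nat.mul_div_cancel _ hp0
    rw [hpe1, hpe2, Nat.choose_zero_right, one_mul] at hmod
    intro hdvd
    have h0 : c.choose (p ^ (e + 1)) ≡ 0 [MOD p] := Nat.modEq_zero_iff_dvd.mpr hdvd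
    have hdvd' : p ∣ (c / p).choose (p ^ e) :=
      Nat.modEq_zero_iff_dvd.mp (hmod.symm.trans h0)
    refine ih (c / p) ?_ ?_ hdvd'
    · rw [Nat.dvd_div_iff_mul_dvd hpc, ← pow_succ']
      exact h1
    · rw [Nat.dvd_div_iff_mul_dvd hpc, ← pow_succ']
      exact h2

-- Nat division arithmetic
lemma Nfac_mul (c j : ℕ) (hj : j < c) : (c.factorial / (c - j)) * (c - j) = c.factorial :=
  Nat.div_mul_cancel (Nat.dvd_factorial (by omega) (by omega))

lemma Nfac_pos (c j : ℕ) (hj : j < c) : 0 < c.factorial / (c - j) :=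
  Nat.div_pos (Nat.le_of_dvd c.factorial_pos (Nat.dvd_factorial (by omega) (by omega)))
    (by omega)

lemma div_fact_eq (o c j : ℕ) (hj : j < c) :
    o / (c.factorial / (c - j)) = o * (c - j) / c.factorial := by
  conv_rhs => rw [← Nfac_mul c j hj]
  rw [Nat.mul_div_mul_right _ _ (by omega : 0 < c - j)]

lemma key_div {o c d j i : ℕ} (ho : o ≤ c.factorial * d) (hji : j ≤ i) (hic : i < c) :
    o * (c - j) / c.factorial ≤ (i - j) * d + o * (c - i) / c.factorial := by
  have h1 : o * (c - j) ≤ o * (c - i) + ((i - j) * d) * c.factorial := by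
    have he : o * (c - j) = o * (c - i) + o * (i - j) := by
      rw [← Nat.mul_add]; congr 1; omega
    have h2 : o * (i - j) ≤ ((i - j) * d) * c.factorial := by
      calc o * (i - j) ≤ (c.factorial * d) * (i - j) := Nat.mul_le_mul_right _ ho
      _ = ((i - j) * d) * c.factorial := by ring
    omega
  calc o * (c - j) / c.factorial ≤ (o * (c - i) + ((i - j) * d) * c.factorial) / c.factorial :=
        Nat.div_le_div_right h1
  _ = o * (c - i) / c.factorial + (i - j) * d := Nat.add_mul_div_right _ _ c.factorial_pos
  _ = (i - j) * d + o * (c - i) / c.factorial := by ring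

lemma div_lt_of_lt {o c d j : ℕ} (ho : o < c.factorial * d) (hj : j < c) :
    o * (c - j) / c.factorial < (c - j) * d := by
  rw [Nat.div_lt_iff_lt_mul c.factorial_pos]
  calc o * (c - j) < (c.factorial * d) * (c - j) :=
        Nat.mul_lt_mul_of_lt_of_le ho (le_refl _) (by omega)
  _ = (c - j) * d * c.factorial := by ring

lemma le_div_of_le {o c d j : ℕ} (ho : c.factorial * d ≤ o) (hj : j < c) :
    (c - j) * d ≤ o * (c - j) / c.factorial := by
  rw [Nat.le_div_iff_mul_le c.factorial_pos]
  calc (c - j) * d * c.factorial = (c.factorial * d) * (c - j) := by ring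
  _ ≤ o * (c - j) := Nat.mul_le_mul_right _ ho
-- coefficient of (X - C v)^i in a power series ring
lemma coeff_X_sub_C_pow {A : Type*} [CommRing A] (v : A) (i j : ℕ) :
    PowerSeries.coeff j ((PowerSeries.X - PowerSeries.C v) ^ i) =
      (i.choose j : A) * (-v) ^ (i - j) * (if j ≤ i then 1 else 0) := by
  rw [sub_eq_add_neg, ← map_neg (PowerSeries.C), add_pow, map_sum]
  have hterm : ∀ k ∈ Finset.range (i + 1),
      PowerSeries.coeff j
          (PowerSeries.X ^ k * PowerSeries.C (-v) ^ (i - k) * ((i.choose k : ℕ) : PowerSeries A))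
        = if k = j then (i.choose j : A) * (-v) ^ (i - j) else 0 := by
    intro k _
    have hre : PowerSeries.X ^ k * PowerSeries.C (-v) ^ (i - k) * ((i.choose k : ℕ) : PowerSeries A)
        = PowerSeries.C ((-v) ^ (i - k) * (i.choose k : A)) * PowerSeries.X ^ k := by
      rw [← map_pow, ← map_natCast (PowerSeries.C) (i.choose k), map_mul]
      ring
    rw [hre, PowerSeries.coeff_C_mul, PowerSeries.coeff_X_pow]
    by_cases hkj : k = j
    · subst hkj; simp [mul_comm]
    · rw [if_neg (fun h => hkj h.symm), if_neg hkj, mul_zero]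
  rw [Finset.sum_congr rfl hterm, Finset.sum_ite_eq' (Finset.range (i + 1)) j]
  simp only [Finset.mem_range_succ_iff]
  split_ifs <;> ring

variable {𝕂 : Type*} [Field 𝕂] {n : ℕ}

lemma ordGe_coe_homog {q : MvPolynomial (Fin n) 𝕂} {d : ℕ} (hq : q.IsHomogeneous d) :
    OrdGe d (↑q : MvPowerSeries (Fin n) 𝕂) := by
  intro m hm
  rw [MvPolynomial.coeff_coe]
  exact hq.coeff_eq_zero (by omega)

lemma hasOrd_coe_homog {q : MvPolynomial (Fin n) 𝕂} {d : ℕ} (hq0 : q ≠ 0)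
    (hq : q.IsHomogeneous d) : HasOrd d (↑q : MvPowerSeries (Fin n) 𝕂) := by
  refine ⟨ordGe_coe_homog hq, ?_⟩
  obtain ⟨m, hm⟩ := MvPolynomial.ne_zero_iff.mp hq0
  refine ⟨m, ?_, by rw [MvPolynomial.coeff_coe]; exact hm⟩
  by_contra hdeg
  exact hm (hq.coeff_eq_zero hdeg)
section Engine
variable {q : MvPolynomial (Fin n) 𝕂} {d : ℕ}
variable {E : PowerSeries (MvPowerSeries (Fin n) 𝕂) → ℕ → MvPowerSeries (Fin n) 𝕂}

lemma expansion_coeff (hqd : q.IsHomogeneous d)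
    (hE : ∀ f : PowerSeries (MvPowerSeries (Fin n) 𝕂), ∀ N : ℕ,
      f - ∑ i ∈ Finset.range N, PowerSeries.C (E f i) *
          (PowerSeries.X - PowerSeries.C (↑q : MvPowerSeries (Fin n) 𝕂)) ^ i
        ∈ Ideal.span {(PowerSeries.X -
            PowerSeries.C (↑q : MvPowerSeries (Fin n) 𝕂)) ^ N})
    (g : PowerSeries (MvPowerSeries (Fin n) 𝕂)) (j N : ℕ) (hjN : j < N) :
    OrdGe ((N - j) * d)
      (PowerSeries.coeff j g - ∑ i ∈ Finset.Ico j N,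
        MvPowerSeries.C ((-1 : 𝕂) ^ (i - j) * (i.choose j : 𝕂)) *
          (↑q : MvPowerSeries (Fin n) 𝕂) ^ (i - j) * E g i) := by
  set v : MvPowerSeries (Fin n) 𝕂 := (↑q : MvPowerSeries (Fin n) 𝕂) with hv
  set u : PowerSeries (MvPowerSeries (Fin n) 𝕂) :=
    PowerSeries.X - PowerSeries.C v with hu
  obtain ⟨h, hh⟩ := Ideal.mem_span_singleton.mp (hE g N)
  have hcoeff : PowerSeries.coeff j
      (g - ∑ i ∈ Finset.range N, PowerSeries.C (E g i) * u ^ i)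
      = PowerSeries.coeff j (u ^ N * h) := by rw [hh]
  rw [map_sub, map_sum] at hcoeff
  -- compute the truncated sum
  have hsum : ∑ i ∈ Finset.range N,
      PowerSeries.coeff j
        (PowerSeries.C (E g i) * u ^ i)
      = ∑ i ∈ Finset.Ico j N,
        MvPowerSeries.C ((-1 : 𝕂) ^ (i - j) * (i.choose j : 𝕂)) * v ^ (i - j) * E g i := by
    have hsub : Finset.Ico j N ⊆ Finset.range N := fun x hx =>
      Finset.mem_range.mpr (Finset.mem_Ico.mp hx).2
    rw [← Finset.sum_subset hsub]
    · apply Finset.sum_congr rfl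
      intro i hi
      rw [Finset.mem_Ico] at hi
      rw [PowerSeries.coeff_C_mul, hu, coeff_X_sub_C_pow, if_pos hi.1]
      have hC : MvPowerSeries.C ((-1 : 𝕂) ^ (i - j) * (i.choose j : 𝕂))
          = (-1 : MvPowerSeries (Fin n) 𝕂) ^ (i - j) * ((i.choose j : ℕ) : MvPowerSeries (Fin n) 𝕂) := by
        rw [map_mul, map_pow, map_neg, map_one, map_natCast]
      rw [hC, neg_pow v]
      ring
    · intro i hi hni
      rw [Finset.mem_range] at hi
      rw [Finset.mem_Ico, not_and_or] at hni
      have hij : i < j := by omega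
      rw [PowerSeries.coeff_C_mul, hu, coeff_X_sub_C_pow, if_neg (by omega), mul_zero, mul_zero]
  rw [hsum] at hcoeff
  rw [hcoeff]
  -- bound the coefficient of u^N * h
  rw [PowerSeries.coeff_mul]
  apply OrdGe.finsetSum
  intro p hp
  rw [Finset.HasAntidiagonal.mem_antidiagonal] at hp
  rw [hu, coeff_X_sub_C_pow]
  have hp1 : p.1 ≤ j := by omega
  have hvord : OrdGe ((N - p.1) * d) ((-v) ^ (N - p.1)) :=
    OrdGe.pow (OrdGe.neg (ordGe_coe_homog hqd)) (N - p.1)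
  have hterm : OrdGe ((N - j) * d)
      ((N.choose p.1 : MvPowerSeries (Fin n) 𝕂) * (-v) ^ (N - p.1) * (if p.1 ≤ N then 1 else 0)) := by
    refine OrdGe.mono ?_ (((hvord.mul_left _).mul_right _))
    exact Nat.mul_le_mul_right d (by omega)
  exact hterm.mul_right _
end Engine
lemma initialForm_of_poly (x : MvPowerSeries (Fin n) 𝕂) (P : MvPolynomial (Fin n) 𝕂) (a : ℕ)
    (hP0 : P ≠ 0) (hPh : P.IsHomogeneous a) (hdiff : OrdGe (a + 1) (x - (↑P : MvPowerSeries (Fin n) 𝕂))) :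
    initialForm x = (↑P : MvPowerSeries (Fin n) 𝕂) := by
  have hcsub : ∀ m : Fin n →₀ ℕ, m.degree < a + 1 →
      MvPowerSeries.coeff m x = MvPowerSeries.coeff m (↑P : MvPowerSeries (Fin n) 𝕂) := by
    intro m hm
    have := hdiff m hm
    rw [map_sub, sub_eq_zero] at this
    exact this
  have hxa : homogComp a x = (↑P : MvPowerSeries (Fin n) 𝕂) := by
    funext m
    show (if m.degree = a then MvPowerSeries.coeff m x else 0)
      = MvPowerSeries.coeff m (↑P : MvPowerSeries (Fin n) 𝕂)
    by_cases hdeg : m.degree = a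
    · rw [if_pos hdeg]
      exact hcsub m (by omega)
    · rw [if_neg hdeg, MvPolynomial.coeff_coe]
      exact (hPh.coeff_eq_zero hdeg).symm
  have hlow : ∀ b, b < a → homogComp b x = 0 := by
    intro b hb
    funext m
    show (if m.degree = b then MvPowerSeries.coeff m x else 0) = 0
    by_cases hdeg : m.degree = b
    · rw [if_pos hdeg, hcsub m (by omega), MvPolynomial.coeff_coe]
      exact hPh.coeff_eq_zero (by omega)
    · rw [if_neg hdeg]
  have haS : homogComp a x ≠ 0 := by
    rw [hxa]
    obtain ⟨m, hm⟩ := MvPolynomial.ne_zero_iff.mp hP0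
    intro h0
    apply hm
    have h1 : MvPowerSeries.coeff m (↑P : MvPowerSeries (Fin n) 𝕂) = 0 := by
      rw [h0, map_zero]
    rwa [MvPolynomial.coeff_coe] at h1
  have hSinf : sInf {d' : ℕ | homogComp d' x ≠ 0} = a := by
    refine le_antisymm (Nat.sInf_le haS) (le_csInf ⟨a, haS⟩ ?_)
    intro b hb
    by_contra hba
    exact hb (hlow b (by omega))
  rw [initialForm, hSinf, hxa]

end KGaux

open KGaux

/-- Coordinate change `u = z − q`, `q` a nonzero homogeneous polynomial of positive degree:
if some `f ∈ J` is `z`-regular of order `c` and `o₁ > o`, then `c!·deg q = o` and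
`q^{p^e} = λ·in(f_{c−p^e})` for some `λ ∈ 𝕂^*`, where `p^e` is the largest power of `p`
dividing `c`. -/
theorem translation_increasing_order_shape {𝕂 : Type*} [Field 𝕂] (p : ℕ)
    (hp : p.Prime) [CharP 𝕂 p] {n : ℕ}
    (q : MvPolynomial (Fin n) 𝕂) (d : ℕ) (hq0 : q ≠ 0) (hqd : q.IsHomogeneous d) (hd : 1 ≤ d)
    (u : PowerSeries (MvPowerSeries (Fin n) 𝕂))
    (hu : u = PowerSeries.X -
      PowerSeries.C (↑q : MvPowerSeries (Fin n) 𝕂))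
    (J : Ideal (PowerSeries (MvPowerSeries (Fin n) 𝕂))) (c : ℕ) (hc1 : 1 ≤ c)
    (hc : idealOrd (IsLocalRing.maximalIdeal (PowerSeries (MvPowerSeries (Fin n) 𝕂))) J
      = (c : ℕ∞))
    (E : PowerSeries (MvPowerSeries (Fin n) 𝕂) → ℕ → MvPowerSeries (Fin n) 𝕂)
    (hE : ∀ f : PowerSeries (MvPowerSeries (Fin n) 𝕂), ∀ N : ℕ,
      f - ∑ i ∈ Finset.range N, PowerSeries.C (E f i) * u ^ i
        ∈ Ideal.span {u ^ N})
    (e : ℕ) (he : p ^ e ∣ c) (he' : ¬ p ^ (e + 1) ∣ c)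
    (f : PowerSeries (MvPowerSeries (Fin n) 𝕂)) (hfJ : f ∈ J) (hreg : zRegular f c)
    (hincr : idealOrd (IsLocalRing.maximalIdeal (MvPowerSeries (Fin n) 𝕂)) (coeffIdealE E J c)
      > idealOrd (IsLocalRing.maximalIdeal (MvPowerSeries (Fin n) 𝕂)) (coeffIdeal J c)) :
    ((c.factorial * d : ℕ) : ℕ∞)
        = idealOrd (IsLocalRing.maximalIdeal (MvPowerSeries (Fin n) 𝕂)) (coeffIdeal J c) ∧
      ∃ lam : 𝕂, lam ≠ 0 ∧
        (↑q : MvPowerSeries (Fin n) 𝕂) ^ (p ^ e)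
          = MvPowerSeries.C lam *
              initialForm (PowerSeries.coeff (c - p ^ e) f) := by
  subst hu
  have cpos : 0 < c := hc1
  have pepos : 0 < p ^ e := pow_pos hp.pos e
  have pele : p ^ e ≤ c := Nat.le_of_dvd cpos he
  set j₀ := c - p ^ e with hj₀def
  have hj₀c : j₀ < c := by omega
  have hcj₀ : c - j₀ = p ^ e := by omega
  -- extract o
  obtain ⟨o, ho⟩ : ∃ o : ℕ,
      idealOrd (IsLocalRing.maximalIdeal (MvPowerSeries (Fin n) 𝕂)) (coeffIdeal J c)
        = (o : ℕ∞) := by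
    have hne : idealOrd (IsLocalRing.maximalIdeal (MvPowerSeries (Fin n) 𝕂)) (coeffIdeal J c)
        ≠ ⊤ := ne_top_of_lt hincr
    obtain ⟨o, ho⟩ := WithTop.ne_top_iff_exists.mp hne
    exact ⟨o, ho.symm⟩
  have hKle : coeffIdeal J c ≤
      (IsLocalRing.maximalIdeal (MvPowerSeries (Fin n) 𝕂)) ^ o := idealOrd_le_pow ho
  have hKnle : ¬ coeffIdeal J c ≤
      (IsLocalRing.maximalIdeal (MvPowerSeries (Fin n) 𝕂)) ^ (o + 1) := idealOrd_not_le_pow ho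
  have hK1le : coeffIdealE E J c ≤
      (IsLocalRing.maximalIdeal (MvPowerSeries (Fin n) 𝕂)) ^ (o + 1) :=
    le_pow_of_lt_idealOrd (ho ▸ hincr)
  -- elementwise order bounds
  have hordK : ∀ g ∈ J, ∀ j, j < c →
      OrdGe o ((PowerSeries.coeff j g) ^ (c.factorial / (c - j))) := by
    intro g hg j hj
    refine maxpow_le_ordIdeal o (hKle ?_)
    have h1 : PowerSeries.coeff j g ∈
        Ideal.span ((PowerSeries.coeff j) '' J) :=
      Ideal.subset_span ⟨g, hg, rfl⟩
    exact ideal_le_sum (Finset.mem_range.mpr hj) (Ideal.pow_mem_pow h1 _)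
  have hordK1 : ∀ g ∈ J, ∀ j, j < c →
      OrdGe (o * (c - j) / c.factorial + 1) (E g j) := by
    intro g hg j hj
    have hpow : OrdGe (o + 1) ((E g j) ^ (c.factorial / (c - j))) := by
      refine maxpow_le_ordIdeal (o + 1) (hK1le ?_)
      have h1 : E g j ∈ Ideal.span ((fun f => E f j) '' J) :=
        Ideal.subset_span ⟨g, hg, rfl⟩
      exact ideal_le_sum (Finset.mem_range.mpr hj) (Ideal.pow_mem_pow h1 _)
    apply ordGe_root (Nfac_pos c j hj) hpow
    rw [Nat.add_sub_cancel, ← div_fact_eq o c j hj]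
    have h2 := Nat.div_mul_le_self o (c.factorial / (c - j))
    have h3 : (c.factorial / (c - j)) * (o / (c.factorial / (c - j)))
        = (o / (c.factorial / (c - j))) * (c.factorial / (c - j)) := mul_comm _ _
    omega
  have hexp := expansion_coeff (E := E) hqd hE
  -- constant coefficient of E f c
  have hfc : MvPowerSeries.constantCoeff (E f c) ≠ 0 := by
    have h1 := hexp f c (c + 1) (by omega)
    rw [Nat.Ico_succ_singleton, Finset.sum_singleton] at h1
    simp only [Nat.sub_self, pow_zero, Nat.choose_self, Nat.cast_one, mul_one, one_mul,
      map_one] at h1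
    have h0 := h1 0 (by
      rw [map_zero]
      have hcc : c + 1 - c = 1 := by omega
      rw [hcc, one_mul]
      omega)
    rw [map_sub, MvPowerSeries.coeff_zero_eq_constantCoeff_apply,
      MvPowerSeries.coeff_zero_eq_constantCoeff_apply] at h0
    have heq : MvPowerSeries.constantCoeff
        (PowerSeries.coeff c f)
        = MvPowerSeries.constantCoeff (E f c) := sub_eq_zero.mp h0
    rw [← heq]
    exact hreg.2
  -- the constant a_c
  set ac : 𝕂 := (-1 : 𝕂) ^ (c - j₀) * (c.choose j₀ : 𝕂) with hac
  have hacne : ac ≠ 0 := by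
    refine mul_ne_zero (pow_ne_zero _ (neg_ne_zero.mpr one_ne_zero)) ?_
    have hsymm : c.choose j₀ = c.choose (p ^ e) := by
      rw [hj₀def, Nat.choose_symm pele]
    rw [hsymm]
    intro h0
    exact not_dvd_choose_pow hp e c he he' ((CharP.cast_eq_zero_iff 𝕂 p _).mp h0)
  -- key estimate for c!d ≤ o
  have hkey : c.factorial * d ≤ o →
      OrdGe (p ^ e * d + 1) (PowerSeries.coeff j₀ f -
        MvPowerSeries.C ac * (↑q : MvPowerSeries (Fin n) 𝕂) ^ (c - j₀) * E f c) := by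
    intro hod
    set N := j₀ + p ^ e * d + 1 with hN
    have hj₀N : j₀ < N := by omega
    have hcN : c < N := by
      have h2 : p ^ e * 1 ≤ p ^ e * d := Nat.mul_le_mul_left _ hd
      omega
    have h1 := hexp f j₀ N hj₀N
    have hcmem : c ∈ Finset.Ico j₀ N := Finset.mem_Ico.mpr ⟨by omega, hcN⟩
    rw [← Finset.sum_erase_add _ _ hcmem] at h1
    have hsplit : PowerSeries.coeff j₀ f -
        MvPowerSeries.C ac * (↑q : MvPowerSeries (Fin n) 𝕂) ^ (c - j₀) * E f c
        = (PowerSeries.coeff j₀ f -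
            ((∑ i ∈ (Finset.Ico j₀ N).erase c,
              MvPowerSeries.C ((-1 : 𝕂) ^ (i - j₀) * (i.choose j₀ : 𝕂)) *
                (↑q : MvPowerSeries (Fin n) 𝕂) ^ (i - j₀) * E f i) +
              MvPowerSeries.C ((-1 : 𝕂) ^ (c - j₀) * (c.choose j₀ : 𝕂)) *
                (↑q : MvPowerSeries (Fin n) 𝕂) ^ (c - j₀) * E f c))
          + ∑ i ∈ (Finset.Ico j₀ N).erase c,
              MvPowerSeries.C ((-1 : 𝕂) ^ (i - j₀) * (i.choose j₀ : 𝕂)) *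
                (↑q : MvPowerSeries (Fin n) 𝕂) ^ (i - j₀) * E f i := by
      rw [hac]; ring
    rw [hsplit]
    refine OrdGe.add (h1.mono ?_) (OrdGe.finsetSum ?_)
    · have hNj : N - j₀ = p ^ e * d + 1 := by omega
      rw [hNj]
      have h7 : (p ^ e * d + 1) * 1 ≤ (p ^ e * d + 1) * d := Nat.mul_le_mul_left _ hd
      omega
    · intro i hi
      obtain ⟨hine, hiIco⟩ := Finset.mem_erase.mp hi
      rw [Finset.mem_Ico] at hiIco
      rcases lt_or_ge i c with hic | hci
      · have hvE : OrdGe ((i - j₀) * d + (o * (c - i) / c.factorial + 1))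
            ((↑q : MvPowerSeries (Fin n) 𝕂) ^ (i - j₀) * E f i) :=
          ((ordGe_coe_homog hqd).pow _).mul (hordK1 f hfJ i hic)
        have hterm := hvE.mul_left
          (MvPowerSeries.C ((-1 : 𝕂) ^ (i - j₀) * (i.choose j₀ : 𝕂)))
        rw [← mul_assoc] at hterm
        refine hterm.mono ?_
        have h3 := le_div_of_le hod hic
        have h4 : (i - j₀) * d + (c - i) * d = p ^ e * d := by
          rw [← Nat.add_mul]
          congr 1
          omega
        omega
      · have hbase : OrdGe ((i - j₀) * d) ((↑q : MvPowerSeries (Fin n) 𝕂) ^ (i - j₀)) :=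
          (ordGe_coe_homog hqd).pow _
        have hterm := (hbase.mul_left
          (MvPowerSeries.C ((-1 : 𝕂) ^ (i - j₀) * (i.choose j₀ : 𝕂)))).mul_right (E f i)
        refine hterm.mono ?_
        have h5 : (p ^ e + 1) * d ≤ (i - j₀) * d := Nat.mul_le_mul_right _ (by omega)
        have h6 : (p ^ e + 1) * d = p ^ e * d + d := by ring
        omega
  -- case o > c!d impossible
  have hole : o ≤ c.factorial * d := by
    by_contra hgt
    push_neg at hgt
    have hkey' := hkey hgt.le
    have hqpow : HasOrd (p ^ e * d) ((↑q : MvPowerSeries (Fin n) 𝕂) ^ (p ^ e)) := by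
      have h1 : HasOrd (p ^ e * d) (↑(q ^ (p ^ e)) : MvPowerSeries (Fin n) 𝕂) :=
        hasOrd_coe_homog (pow_ne_zero _ hq0) (by rw [mul_comm]; exact hqd.pow _)
      rwa [MvPolynomial.coe_pow] at h1
    have hterm : HasOrd (p ^ e * d)
        (MvPowerSeries.C ac * ((↑q : MvPowerSeries (Fin n) 𝕂) ^ (p ^ e) * E f c)) := by
      have h2 := (hasOrd_C hacne).mul (hqpow.mul (hasOrd_of_constantCoeff hfc))
      simpa using h2
    have hx : HasOrd (p ^ e * d) (PowerSeries.coeff j₀ f) := by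
      have hid : PowerSeries.coeff j₀ f
          = MvPowerSeries.C ac * ((↑q : MvPowerSeries (Fin n) 𝕂) ^ (p ^ e) * E f c)
            + (PowerSeries.coeff j₀ f -
               MvPowerSeries.C ac * (↑q : MvPowerSeries (Fin n) 𝕂) ^ (c - j₀) * E f c) := by
        rw [hcj₀]; ring
      rw [hid]
      exact hterm.add_OrdGe hkey'
    have hM : (c.factorial / (c - j₀)) * (p ^ e * d) = c.factorial * d := by
      rw [hcj₀]
      have hdvd : p ^ e ∣ c.factorial := dvd_trans he (Nat.dvd_factorial cpos le_rfl)
      calc c.factorial / p ^ e * (p ^ e * d) = (c.factorial / p ^ e * p ^ e) * d := by ring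
      _ = c.factorial * d := by rw [Nat.div_mul_cancel hdvd]
    have hxp := hx.pow (c.factorial / (c - j₀)) (Nfac_pos c j₀ hj₀c)
    rw [hM] at hxp
    obtain ⟨-, m, hmdeg, hmne⟩ := hxp
    exact hmne (hordK f hfJ j₀ hj₀c m (by omega))
  -- case o < c!d impossible
  have hoge : c.factorial * d ≤ o := by
    by_contra hlt
    push_neg at hlt
    have hnot : ¬ ∀ j, j < c → ∀ g ∈ J,
        OrdGe (o * (c - j) / c.factorial + 1)
          (PowerSeries.coeff j g) := by
      intro hall
      apply hKnle
      refine le_trans (ideal_sum_le ?_) (ordIdeal_le_maxpow (o + 1))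
      intro j hj
      rw [Finset.mem_range] at hj
      have hsp : Ideal.span ((PowerSeries.coeff j) '' J)
          ≤ ordIdeal 𝕂 n (o * (c - j) / c.factorial + 1) := by
        rw [Ideal.span_le]
        rintro x ⟨g, hg, rfl⟩
        exact hall j hj g hg
      refine le_trans (pow_le_pow_of_le hsp _)
        (le_trans (ordIdeal_pow_le _ _) (ordIdeal_anti ?_))
      have hNpos := Nfac_pos c j hj
      have hdm := Nat.div_add_mod o (c.factorial / (c - j))
      have hmod := Nat.mod_lt o hNpos
      rw [← div_fact_eq o c j hj]
      have hexpand : (c.factorial / (c - j)) * (o / (c.factorial / (c - j)) + 1)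
          = (c.factorial / (c - j)) * (o / (c.factorial / (c - j))) + (c.factorial / (c - j)) := by
        ring
      omega
    push_neg at hnot
    obtain ⟨j₁, hj₁c, g, hgJ, hbad⟩ := hnot
    unfold OrdGe at hbad
    push_neg at hbad
    obtain ⟨m, hmdeg, hmne⟩ := hbad
    obtain ⟨s, hsle, hsOrd⟩ := exists_hasOrd hmne
    have hs2 : s ≤ o * (c - j₁) / c.factorial := by omega
    set N := j₁ + s + 1 with hNdef
    have h1 := hexp g j₁ N (by omega)
    have hOrd : OrdGe (s + 1) (PowerSeries.coeff j₁ g) := by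
      have hsum : OrdGe (s + 1) (∑ i ∈ Finset.Ico j₁ N,
          MvPowerSeries.C ((-1 : 𝕂) ^ (i - j₁) * (i.choose j₁ : 𝕂)) *
            (↑q : MvPowerSeries (Fin n) 𝕂) ^ (i - j₁) * E g i) := by
        apply OrdGe.finsetSum
        intro i hi
        rw [Finset.mem_Ico] at hi
        rcases lt_or_ge i c with hic | hci
        · have hvE : OrdGe ((i - j₁) * d + (o * (c - i) / c.factorial + 1))
              ((↑q : MvPowerSeries (Fin n) 𝕂) ^ (i - j₁) * E g i) :=
            ((ordGe_coe_homog hqd).pow _).mul (hordK1 g hgJ i hic)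
          have hterm := hvE.mul_left
            (MvPowerSeries.C ((-1 : 𝕂) ^ (i - j₁) * (i.choose j₁ : 𝕂)))
          rw [← mul_assoc] at hterm
          refine hterm.mono ?_
          have h3 := key_div (c := c) (d := d) (o := o) hlt.le hi.1 hic
          omega
        · have hbase : OrdGe ((i - j₁) * d) ((↑q : MvPowerSeries (Fin n) 𝕂) ^ (i - j₁)) :=
            (ordGe_coe_homog hqd).pow _
          have hterm := (hbase.mul_left
            (MvPowerSeries.C ((-1 : 𝕂) ^ (i - j₁) * (i.choose j₁ : 𝕂)))).mul_right
              (E g i)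
          refine hterm.mono ?_
          have h4 := div_lt_of_lt (j := j₁) hlt hj₁c
          have h5 : (c - j₁) * d ≤ (i - j₁) * d := Nat.mul_le_mul_right _ (by omega)
          omega
      have hid : PowerSeries.coeff j₁ g
          = (PowerSeries.coeff j₁ g - ∑ i ∈ Finset.Ico j₁ N,
              MvPowerSeries.C ((-1 : 𝕂) ^ (i - j₁) * (i.choose j₁ : 𝕂)) *
                (↑q : MvPowerSeries (Fin n) 𝕂) ^ (i - j₁) * E g i)
            + ∑ i ∈ Finset.Ico j₁ N,
              MvPowerSeries.C ((-1 : 𝕂) ^ (i - j₁) * (i.choose j₁ : 𝕂)) *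
                (↑q : MvPowerSeries (Fin n) 𝕂) ^ (i - j₁) * E g i := by ring
      rw [hid]
      refine OrdGe.add (h1.mono ?_) hsum
      have hNj : N - j₁ = s + 1 := by omega
      rw [hNj]
      have h6 : (s + 1) * 1 ≤ (s + 1) * d := Nat.mul_le_mul_left _ hd
      omega
    obtain ⟨-, m', hm'deg, hm'ne⟩ := hsOrd
    exact hm'ne (hOrd m' (by omega))
  have ho_eq : o = c.factorial * d := le_antisymm hole hoge
  constructor
  · rw [ho, ho_eq]
  · have hkey' := hkey (le_of_eq ho_eq.symm)
    set lam0 : 𝕂 := MvPowerSeries.constantCoeff (E f c) with hlam0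
    have hh1 : OrdGe 1 (E f c - MvPowerSeries.C lam0) := by
      intro m hm
      have hm0 : m = 0 := (Finsupp.degree_eq_zero_iff m).mp (by omega)
      subst hm0
      rw [map_sub, MvPowerSeries.coeff_zero_eq_constantCoeff_apply,
        MvPowerSeries.coeff_zero_eq_constantCoeff_apply, MvPowerSeries.constantCoeff_C, hlam0,
        sub_self]
    set P : MvPolynomial (Fin n) 𝕂 := MvPolynomial.C (ac * lam0) * q ^ (p ^ e) with hP
    have hP0 : P ≠ 0 := by
      refine mul_ne_zero ?_ (pow_ne_zero _ hq0)
      simpa using mul_ne_zero hacne hfc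
    have hPh : P.IsHomogeneous (p ^ e * d) := by
      have h2 := (MvPolynomial.isHomogeneous_C _ (ac * lam0)).mul (hqd.pow (p ^ e))
      have h3 : 0 + d * p ^ e = p ^ e * d := by ring
      rwa [h3] at h2
    have hcast : (↑P : MvPowerSeries (Fin n) 𝕂)
        = MvPowerSeries.C (ac * lam0) * (↑q : MvPowerSeries (Fin n) 𝕂) ^ (p ^ e) := by
      rw [hP, MvPolynomial.coe_mul, MvPolynomial.coe_C, MvPolynomial.coe_pow]
    have hdiff : OrdGe (p ^ e * d + 1)
        (PowerSeries.coeff j₀ f - (↑P : MvPowerSeries (Fin n) 𝕂)) := by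
      have hid : PowerSeries.coeff j₀ f - (↑P : MvPowerSeries (Fin n) 𝕂)
          = (PowerSeries.coeff j₀ f -
              MvPowerSeries.C ac * (↑q : MvPowerSeries (Fin n) 𝕂) ^ (c - j₀) * E f c)
            + MvPowerSeries.C ac *
              ((↑q : MvPowerSeries (Fin n) 𝕂) ^ (p ^ e) * (E f c - MvPowerSeries.C lam0)) := by
        rw [hcast, hcj₀, map_mul]
        ring
      rw [hid]
      refine OrdGe.add hkey' ?_
      have hq2 : OrdGe (p ^ e * d) ((↑q : MvPowerSeries (Fin n) 𝕂) ^ (p ^ e)) :=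
        (ordGe_coe_homog hqd).pow (p ^ e)
      exact (hq2.mul hh1).mul_left (MvPowerSeries.C ac)
    have hinit := initialForm_of_poly _ P (p ^ e * d) hP0 hPh hdiff
    refine ⟨(ac * lam0)⁻¹, inv_ne_zero (mul_ne_zero hacne hfc), ?_⟩
    rw [hinit, hcast, ← mul_assoc, ← map_mul, inv_mul_cancel₀ (mul_ne_zero hacne hfc), map_one,
      one_mul]
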